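/- Let ρ > 0, x₀ ≥ 0, b₀ > 0, b > 0, M > 0, and let F : ℝ → ℝ be continuously differentiable with F(0) = 0, −b₀ ≤ F'(y) ≤ 0 for all y ∈ ℝ, and F(y) ≤ −b·y + M for all y ≥ 0. Let u be an admissible control with ∫₀^∞ e^{-ρt} u(t) dt ≤ K₁ < ∞, and let x be a trajectory associated with u. Then t ↦ e^{-ρt} x(t) is integrable on [0,∞) and ∫₀^∞ e^{-ρt} x(t) dt ≤ x₀/(ρ+b) + M/(ρ(ρ+b)) + K₁/(ρ+b). -/

import Mathlib

open MeasureTheory Filter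

/-- A control `u` is admissible: measurable, locally integrable on `[0,∞)`,
and positive almost everywhere on `[0,∞)`. -/
def Admissible (u : ℝ → ℝ) : Prop :=
  Measurable u ∧ (∀ T : ℝ, 0 < T → IntegrableOn u (Set.Icc 0 T)) ∧
    (∀ᵐ t ∂(volume.restrict (Set.Ici (0:ℝ))), 0 < u t)

/-- `x` is a trajectory associated with the control `u`, dynamics `F` and
initial state `x₀`. -/
def Trajectory (F : ℝ → ℝ) (x₀ : ℝ) (u x : ℝ → ℝ) : Prop :=
  ContinuousOn x (Set.Ici 0) ∧
    ∀ t : ℝ, 0 ≤ t → x t = x₀ + ∫ s in (0:ℝ)..t, (F (x s) + u s)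

/-- The objective functional `B(u,x) = ∫₀^∞ e^{-ρt}(log u(t) - c x(t)²) dt`. -/
noncomputable def objective (ρ c : ℝ) (u x : ℝ → ℝ) : ℝ :=
  ∫ t in Set.Ioi (0:ℝ), Real.exp (-ρ * t) * (Real.log (u t) - c * (x t) ^ 2)

/-- Integrability of the integrand of the objective functional. -/
def ObjIntegrable (ρ c : ℝ) (u x : ℝ → ℝ) : Prop :=
  IntegrableOn (fun t => Real.exp (-ρ * t) * (Real.log (u t) - c * (x t) ^ 2))
    (Set.Ioi (0:ℝ))

set_option linter.unusedVariables false

lemma exp_intervalIntegral (ρ : ℝ) (hρ : ρ ≠ 0) (a T : ℝ) :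
    ∫ t in a..T, Real.exp (-ρ * t) = (Real.exp (-ρ * a) - Real.exp (-ρ * T)) / ρ := by
  have h : ∀ t ∈ Set.uIcc a T,
      HasDerivAt (fun t => -Real.exp (-ρ * t) / ρ) (Real.exp (-ρ * t)) t := by
    intro t _
    have h1 : HasDerivAt (fun t : ℝ => -ρ * t) (-ρ) t := by
      simpa using (hasDerivAt_id t).const_mul (-ρ)
    have h3 := (h1.exp.neg).div_const ρ
    refine h3.congr_deriv ?_
    rw [div_eq_iff hρ]; ring
  rw [intervalIntegral.integral_eq_sub_of_hasDerivAt h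
    (Continuous.intervalIntegrable (by continuity) a T)]
  ring

lemma fubini_triangle (ρ T : ℝ) (hρ : ρ ≠ 0) (hT : 0 < T) (g : ℝ → ℝ)
    (hgm : Measurable g) (hgi : IntegrableOn g (Set.Ioc 0 T)) :
    (∫ t in Set.Ioc (0:ℝ) T, Real.exp (-ρ * t) * ∫ s in Set.Ioc (0:ℝ) t, g s)
      = ∫ s in Set.Ioc (0:ℝ) T, g s * ((Real.exp (-ρ * s) - Real.exp (-ρ * T)) / ρ) := by
  set μ := volume.restrict (Set.Ioc (0:ℝ) T) with hμ
  set f : ℝ → ℝ → ℝ :=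
    fun t s => Set.indicator (Set.Iic t) (fun s => Real.exp (-ρ * t) * g s) s with hf
  have hint : Integrable (Function.uncurry f) (μ.prod μ) := by
    have h1 : Integrable (fun p : ℝ × ℝ => Real.exp (-ρ * p.1) * g p.2) (μ.prod μ) := by
      have hc : Continuous fun t : ℝ => Real.exp (-ρ * t) := by continuity
      exact Integrable.mul_prod hc.integrableOn_Ioc hgi
    have h2 : MeasurableSet {p : ℝ × ℝ | p.2 ≤ p.1} :=
      (isClosed_le continuous_snd continuous_fst).measurableSet
    have heq : Function.uncurry f
        = Set.indicator {p : ℝ × ℝ | p.2 ≤ p.1}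
            (fun p => Real.exp (-ρ * p.1) * g p.2) := by
      funext p
      rcases p with ⟨t, s⟩
      by_cases h : s ≤ t <;>
        simp [Function.uncurry, hf, Set.indicator, h]
    rw [heq]
    exact h1.indicator h2
  have hswap := MeasureTheory.integral_integral_swap hint
  calc (∫ t in Set.Ioc (0:ℝ) T, Real.exp (-ρ * t) * ∫ s in Set.Ioc (0:ℝ) t, g s)
      = ∫ t, (∫ s, f t s ∂μ) ∂μ := by
        refine setIntegral_congr_fun measurableSet_Ioc ?_
        intro t ht
        dsimp only
        have h1 : (∫ s, f t s ∂μ) = ∫ s in Set.Ioc (0:ℝ) T ∩ Set.Iic t,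
            Real.exp (-ρ * t) * g s := by
          rw [hμ, hf]
          exact setIntegral_indicator measurableSet_Iic
        have h2 : Set.Ioc (0:ℝ) T ∩ Set.Iic t = Set.Ioc (0:ℝ) t := by
          ext z
          simp only [Set.mem_inter_iff, Set.mem_Ioc, Set.mem_Iic]
          constructor
          · rintro ⟨⟨hz1, _⟩, hz2⟩; exact ⟨hz1, hz2⟩
          · rintro ⟨hz1, hz2⟩; exact ⟨⟨hz1, hz2.trans ht.2⟩, hz2⟩
        rw [h1, h2, integral_const_mul]
    _ = ∫ s, (∫ t, f t s ∂μ) ∂μ := hswap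
    _ = ∫ s in Set.Ioc (0:ℝ) T, g s * ((Real.exp (-ρ * s) - Real.exp (-ρ * T)) / ρ) := by
        refine setIntegral_congr_fun measurableSet_Ioc ?_
        intro s hs
        dsimp only
        have h0 : (fun t => f t s) = fun t =>
            Set.indicator (Set.Ici s) (fun t => Real.exp (-ρ * t) * g s) t := by
          funext t
          by_cases h : s ≤ t <;>
            simp [hf, Set.indicator, h]
        have h1 : (∫ t, f t s ∂μ) = ∫ t in Set.Ioc (0:ℝ) T ∩ Set.Ici s,
            Real.exp (-ρ * t) * g s := by
          rw [hμ]
          rw [show (fun t => f t s) = _ from h0]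
          exact setIntegral_indicator measurableSet_Ici
        have h2 : Set.Ioc (0:ℝ) T ∩ Set.Ici s = Set.Icc s T := by
          ext z
          simp only [Set.mem_inter_iff, Set.mem_Ioc, Set.mem_Icc, Set.mem_Ici]
          constructor
          · rintro ⟨⟨_, hz2⟩, hz3⟩; exact ⟨hz3, hz2⟩
          · rintro ⟨hz1, hz2⟩; exact ⟨⟨lt_of_lt_of_le hs.1 hz1, hz2⟩, hz1⟩
        rw [h1, h2, integral_mul_const]
        rw [MeasureTheory.integral_Icc_eq_integral_Ioc,
          ← intervalIntegral.integral_of_le hs.2, exp_intervalIntegral ρ hρ s T]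
        ring

/-- Bound on the discounted integral of the state in terms of the discounted
integral of the control. -/
theorem discounted_state_bound
    (ρ x₀ b₀ b M K₁ : ℝ) (F : ℝ → ℝ) (u x : ℝ → ℝ)
    (hρ : 0 < ρ) (hx₀ : 0 ≤ x₀) (hb₀ : 0 < b₀) (hb : 0 < b) (hM : 0 < M)
    (hF : ContDiff ℝ 1 F) (hF0 : F 0 = 0)
    (hF' : ∀ y : ℝ, -b₀ ≤ deriv F y ∧ deriv F y ≤ 0)
    (hFlin : ∀ y : ℝ, 0 ≤ y → F y ≤ -b * y + M)
    (hu : Admissible u)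
    (huint : IntegrableOn (fun t => Real.exp (-ρ * t) * u t) (Set.Ioi (0:ℝ)))
    (huK : (∫ t in Set.Ioi (0:ℝ), Real.exp (-ρ * t) * u t) ≤ K₁)
    (hx : Trajectory F x₀ u x) :
    IntegrableOn (fun t => Real.exp (-ρ * t) * x t) (Set.Ioi (0:ℝ)) ∧
      (∫ t in Set.Ioi (0:ℝ), Real.exp (-ρ * t) * x t) ≤
        x₀ / (ρ + b) + M / (ρ * (ρ + b)) + K₁ / (ρ + b) := by
  obtain ⟨humeas, huloc, hupos⟩ := hu
  obtain ⟨hxc, hxeq⟩ := hx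
  have hexpc : Continuous fun t : ℝ => Real.exp (-ρ * t) := by continuity
  -- extended state
  set y : ℝ → ℝ := fun t => x (max t 0) with hydef
  have hyc : Continuous y :=
    hxc.comp_continuous (continuous_id.max continuous_const) (fun t => le_max_right t 0)
  have hyx : ∀ t, 0 ≤ t → y t = x t := by
    intro t ht
    simp only [hydef, max_eq_left ht]
  set g : ℝ → ℝ := fun s => F (y s) + u s with hgdef
  have hFc : Continuous fun s => F (y s) := hF.continuous.comp hyc
  have hgm : Measurable g := hFc.measurable.add humeas
  have huii : ∀ T : ℝ, 0 < T → IntervalIntegrable u volume 0 T := by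
    intro T hT
    rw [intervalIntegrable_iff_integrableOn_Ioc_of_le hT.le]
    exact (huloc T hT).mono_set Set.Ioc_subset_Icc_self
  have hgii : ∀ T : ℝ, 0 ≤ T → IntervalIntegrable g volume 0 T := by
    intro T hT
    rcases eq_or_lt_of_le hT with h | h
    · rw [← h]
    · exact (hFc.intervalIntegrable 0 T).add (huii T h)
  have htraj : ∀ t, 0 ≤ t → y t = x₀ + ∫ s in (0:ℝ)..t, g s := by
    intro t ht
    rw [hyx t ht, hxeq t ht]
    congr 1
    refine intervalIntegral.integral_congr ?_
    intro s hs
    rw [Set.uIcc_of_le ht] at hs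
    simp only [hgdef, hyx s hs.1]
  have hy0 : y 0 = x₀ := by
    have h := htraj 0 le_rfl
    simpa using h
  have hanti : Antitone F :=
    antitone_of_deriv_nonpos (hF.differentiable one_ne_zero) (fun z => (hF' z).2)
  have hupos' : ∀ s : Set ℝ, s ⊆ Set.Ici 0 →
      (∀ᵐ t ∂(volume.restrict s), 0 < u t) :=
    fun s hs => ae_restrict_of_ae_restrict_of_subset hs hupos
  -- Step A : nonnegativity of the state
  have hynn : ∀ t, 0 ≤ t → 0 ≤ y t := by
    intro t₁ ht₁
    by_contra hne
    push_neg at hne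
    set S : Set ℝ := Set.Icc 0 t₁ ∩ y ⁻¹' Set.Ici 0 with hS
    have hScl : IsClosed S := isClosed_Icc.inter (isClosed_Ici.preimage hyc)
    have h0S : (0:ℝ) ∈ S := ⟨⟨le_rfl, ht₁⟩, by simpa [hy0] using hx₀⟩
    have hbdd : BddAbove S := ⟨t₁, fun s hs => hs.1.2⟩
    set t₀ := sSup S with ht₀def
    have ht₀S : t₀ ∈ S := hScl.csSup_mem ⟨0, h0S⟩ hbdd
    have ht₀0 : 0 ≤ t₀ := ht₀S.1.1
    have ht₀1 : t₀ ≤ t₁ := ht₀S.1.2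
    have hyt₀ : 0 ≤ y t₀ := ht₀S.2
    have hlt : t₀ < t₁ := by
      rcases eq_or_lt_of_le ht₀1 with h | h
      · exfalso; rw [h] at hyt₀; exact absurd hyt₀ (not_le.mpr hne)
      · exact h
    have hnegon : ∀ s ∈ Set.Ioc t₀ t₁, y s ≤ 0 := by
      intro s hs
      by_contra hcon
      push_neg at hcon
      have hsS : s ∈ S := ⟨⟨ht₀0.trans hs.1.le, hs.2⟩, le_of_lt hcon⟩
      exact absurd (le_csSup hbdd hsS) (not_le.mpr hs.1)
    have hdiff : y t₁ - y t₀ = ∫ s in t₀..t₁, g s := by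
      have h := intervalIntegral.integral_interval_sub_left (hgii t₁ ht₁) (hgii t₀ ht₀0)
      rw [htraj t₁ ht₁, htraj t₀ ht₀0]
      linarith [h]
    have hint : 0 ≤ ∫ s in t₀..t₁, g s := by
      rw [intervalIntegral.integral_of_le hlt.le]
      refine setIntegral_nonneg_of_ae_restrict ?_
      have hmem : ∀ᵐ s ∂(volume.restrict (Set.Ioc t₀ t₁)), s ∈ Set.Ioc t₀ t₁ :=
        ae_restrict_mem measurableSet_Ioc
      have hup := hupos' (Set.Ioc t₀ t₁) (fun s hs => ht₀0.trans hs.1.le)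
      filter_upwards [hmem, hup] with s hs hus
      have hFy : F 0 ≤ F (y s) := hanti (hnegon s hs)
      rw [hF0] at hFy
      simp only [Pi.zero_apply, hgdef]
      linarith
    have : 0 ≤ y t₁ := by linarith
    exact absurd this (not_le.mpr hne)
  -- discounted control integral bound
  have huposIoi : 0 ≤ᵐ[volume.restrict (Set.Ioi (0:ℝ))] fun t => Real.exp (-ρ * t) * u t := by
    filter_upwards [hupos' (Set.Ioi 0) Set.Ioi_subset_Ici_self] with t ht
    exact le_of_lt (mul_pos (Real.exp_pos _) ht)
  have huT : ∀ T : ℝ, 0 < T → (∫ s in (0:ℝ)..T, Real.exp (-ρ * s) * u s) ≤ K₁ := by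
    intro T hT
    rw [intervalIntegral.integral_of_le hT.le]
    refine le_trans (setIntegral_mono_set huint huposIoi ?_) huK
    exact Set.Ioc_subset_Ioi_self.eventuallyLE
  have hexpint : ∀ T : ℝ, (∫ t in (0:ℝ)..T, Real.exp (-ρ * t))
      = (1 - Real.exp (-ρ * T)) / ρ := by
    intro T
    have h := exp_intervalIntegral ρ hρ.ne' 0 T
    simpa using h
  -- the key bound on interval integrals
  have hkey : ∀ T : ℝ, 0 < T →
      (∫ t in (0:ℝ)..T, Real.exp (-ρ * t) * y t) ≤
        x₀ / (ρ + b) + M / (ρ * (ρ + b)) + K₁ / (ρ + b) := by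
    intro T hT
    set E := ∫ t in (0:ℝ)..T, Real.exp (-ρ * t) * y t with hE
    set G := ∫ s in (0:ℝ)..T, Real.exp (-ρ * s) * g s with hG
    have hiexpu : IntervalIntegrable (fun s => Real.exp (-ρ * s) * u s) volume 0 T :=
      (huii T hT).continuousOn_mul hexpc.continuousOn
    have hiexpg : IntervalIntegrable (fun s => Real.exp (-ρ * s) * g s) volume 0 T :=
      (hgii T hT.le).continuousOn_mul hexpc.continuousOn
    -- the Fubini identity :  ρ E = x₀ + G - e^{-ρT} y T
    have hA : (∫ t in (0:ℝ)..T, Real.exp (-ρ * t) * (y t - x₀))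
        = ∫ s in Set.Ioc (0:ℝ) T, g s * ((Real.exp (-ρ * s) - Real.exp (-ρ * T)) / ρ) := by
      rw [intervalIntegral.integral_of_le hT.le,
        ← fubini_triangle ρ T hρ.ne' hT g hgm (hgii T hT.le).1]
      refine setIntegral_congr_fun measurableSet_Ioc ?_
      intro t ht
      dsimp only
      have h1 : (∫ s in Set.Ioc (0:ℝ) t, g s) = y t - x₀ := by
        rw [← intervalIntegral.integral_of_le ht.1.le]
        have h := htraj t ht.1.le
        linarith
      rw [h1]
    have hsplit : (∫ s in Set.Ioc (0:ℝ) T, g s * ((Real.exp (-ρ * s) - Real.exp (-ρ * T)) / ρ))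
        = (1 / ρ) * G - (Real.exp (-ρ * T) / ρ) * (y T - x₀) := by
      rw [← intervalIntegral.integral_of_le hT.le]
      have h1 : (fun s => g s * ((Real.exp (-ρ * s) - Real.exp (-ρ * T)) / ρ))
          = fun s => (1 / ρ) * (Real.exp (-ρ * s) * g s) - (Real.exp (-ρ * T) / ρ) * g s := by
        funext s; ring
      rw [h1, intervalIntegral.integral_sub (hiexpg.const_mul _) ((hgii T hT.le).const_mul _),
        intervalIntegral.integral_const_mul, intervalIntegral.integral_const_mul]
      have h2 : (∫ s in (0:ℝ)..T, g s) = y T - x₀ := by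
        have h := htraj T hT.le
        linarith
      rw [h2]
    have hEsplit : E = x₀ * ((1 - Real.exp (-ρ * T)) / ρ)
        + ∫ t in (0:ℝ)..T, Real.exp (-ρ * t) * (y t - x₀) := by
      have h1 : (fun t => Real.exp (-ρ * t) * y t)
          = fun t => x₀ * Real.exp (-ρ * t) + Real.exp (-ρ * t) * (y t - x₀) := by
        funext t; ring
      rw [hE, h1, intervalIntegral.integral_add (f := fun t => x₀ * Real.exp (-ρ * t))
        (g := fun t => Real.exp (-ρ * t) * (y t - x₀))
        ((continuous_const.mul hexpc).intervalIntegrable 0 T)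
        ((hexpc.mul (hyc.sub continuous_const)).intervalIntegrable 0 T),
        intervalIntegral.integral_const_mul, hexpint]
    have hEρ : ρ * E = x₀ + G - Real.exp (-ρ * T) * y T := by
      rw [hEsplit, hA, hsplit]
      field_simp
      ring
    -- bound on G
    have hcy : Continuous fun s => Real.exp (-ρ * s) * (-b * y s + M) :=
      hexpc.mul ((continuous_const.mul hyc).add continuous_const)
    have hGb : G ≤ -b * E + M / ρ + K₁ := by
      have step1 : G ≤ ∫ s in (0:ℝ)..T,
          (Real.exp (-ρ * s) * (-b * y s + M) + Real.exp (-ρ * s) * u s) := by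
        refine intervalIntegral.integral_mono_on hT.le hiexpg
          ((hcy.intervalIntegrable 0 T).add hiexpu) ?_
        intro s hs
        have h1 : F (y s) ≤ -b * y s + M := hFlin _ (hynn s hs.1)
        have h2 : (0:ℝ) < Real.exp (-ρ * s) := Real.exp_pos _
        simp only [hgdef]
        nlinarith [mul_le_mul_of_nonneg_left h1 h2.le]
      have step2 : (∫ s in (0:ℝ)..T,
          (Real.exp (-ρ * s) * (-b * y s + M) + Real.exp (-ρ * s) * u s))
          = (∫ s in (0:ℝ)..T, Real.exp (-ρ * s) * (-b * y s + M))
            + ∫ s in (0:ℝ)..T, Real.exp (-ρ * s) * u s :=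
        intervalIntegral.integral_add (hcy.intervalIntegrable 0 T) hiexpu
      have step3 : (∫ s in (0:ℝ)..T, Real.exp (-ρ * s) * (-b * y s + M))
          = -b * E + M * ((1 - Real.exp (-ρ * T)) / ρ) := by
        have h1 : (fun s => Real.exp (-ρ * s) * (-b * y s + M))
            = fun s => -b * (Real.exp (-ρ * s) * y s) + M * Real.exp (-ρ * s) := by
          funext s; ring
        rw [h1, intervalIntegral.integral_add (f := fun s => -b * (Real.exp (-ρ * s) * y s))
          (g := fun s => M * Real.exp (-ρ * s))
          ((continuous_const.mul (hexpc.mul hyc)).intervalIntegrable 0 T)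
          ((continuous_const.mul hexpc).intervalIntegrable 0 T),
          intervalIntegral.integral_const_mul, intervalIntegral.integral_const_mul,
          hexpint, hE]
      have step4 : M * ((1 - Real.exp (-ρ * T)) / ρ) ≤ M / ρ := by
        have h1 : M * (1 - Real.exp (-ρ * T)) ≤ M := by nlinarith [Real.exp_pos (-ρ * T)]
        calc M * ((1 - Real.exp (-ρ * T)) / ρ) = M * (1 - Real.exp (-ρ * T)) / ρ := by ring
          _ ≤ M / ρ := by gcongr
      have step5 := huT T hT
      linarith
    have heyT : 0 ≤ Real.exp (-ρ * T) * y T :=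
      mul_nonneg (Real.exp_pos _).le (hynn T hT.le)
    have hρb : (0:ℝ) < ρ + b := by linarith
    have hfin : (ρ + b) * E ≤ x₀ + M / ρ + K₁ := by nlinarith
    rw [show x₀ / (ρ + b) + M / (ρ * (ρ + b)) + K₁ / (ρ + b)
        = (x₀ + M / ρ + K₁) / (ρ + b) by field_simp]
    rw [le_div_iff₀ hρb]
    linarith
  -- conclusion
  set C := x₀ / (ρ + b) + M / (ρ * (ρ + b)) + K₁ / (ρ + b) with hC
  have hfc : Continuous fun t => Real.exp (-ρ * t) * y t := hexpc.mul hyc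
  have hnormEq : ∀ T : ℝ, 0 < T →
      (∫ t in (0:ℝ)..T, ‖Real.exp (-ρ * t) * y t‖)
        = ∫ t in (0:ℝ)..T, Real.exp (-ρ * t) * y t := by
    intro T hT
    refine intervalIntegral.integral_congr ?_
    intro t ht
    rw [Set.uIcc_of_le hT.le] at ht
    have : 0 ≤ Real.exp (-ρ * t) * y t := mul_nonneg (Real.exp_pos _).le (hynn t ht.1)
    dsimp only
    rw [Real.norm_eq_abs, abs_of_nonneg this]
  have hyint : IntegrableOn (fun t => Real.exp (-ρ * t) * y t) (Set.Ioi (0:ℝ)) := by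
    refine integrableOn_Ioi_of_intervalIntegral_norm_bounded (f := fun t => Real.exp (-ρ * t) * y t)
      (l := atTop) (b := id) C 0 (fun i => hfc.integrableOn_Ioc) tendsto_id ?_
    filter_upwards [eventually_gt_atTop (0:ℝ)] with i hi
    rw [id, hnormEq i hi]
    exact hkey i hi
  have hlim := intervalIntegral_tendsto_integral_Ioi 0 hyint tendsto_id
  have hyle : (∫ t in Set.Ioi (0:ℝ), Real.exp (-ρ * t) * y t) ≤ C := by
    refine le_of_tendsto hlim ?_
    filter_upwards [eventually_gt_atTop (0:ℝ)] with i hi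
    exact hkey i hi
  have heq : Set.EqOn (fun t => Real.exp (-ρ * t) * y t)
      (fun t => Real.exp (-ρ * t) * x t) (Set.Ioi 0) := by
    intro t ht
    simp only [hyx t (le_of_lt ht)]
  constructor
  · exact hyint.congr_fun heq measurableSet_Ioi
  · rw [← setIntegral_congr_fun measurableSet_Ioi heq]
    exact hyle
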